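/- For every ρ in DORPₙ there exists a partial transformation ρ′ of [n] such that ρρ′ρ = ρ, and both ρρ′ and ρ′ρ are idempotents lying in DORPₙ (in fact ρ′ρ is the identity map on im ρ). Thus DORPₙ is an inverse-ideal of the partial transformation monoid Pₙ. -/

import Mathlib

/-- A partial transformation of the chain `[n]` (elements of `Fin n`). -/
def PT (n : ℕ) := Fin n → Option (Fin n)

/-- Right-to-left composition: `x (ρσ) = (x ρ) σ`. -/
def comp {n : ℕ} (ρ σ : PT n) : PT n := fun x => (ρ x).bind σ

/-- The identity partial transformation. -/
def idPT (n : ℕ) : PT n := fun x => some x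

/-- Isotone (order-preserving) on its domain. -/
def IsIsotone {n : ℕ} (ρ : PT n) : Prop :=
  ∀ x x' y y' : Fin n, ρ x = some y → ρ x' = some y' → x ≤ x' → y ≤ y'

/-- Antitone (order-reversing) on its domain. -/
def IsAntitone {n : ℕ} (ρ : PT n) : Prop :=
  ∀ x x' y y' : Fin n, ρ x = some y → ρ x' = some y' → x ≤ x' → y' ≤ y

/-- Order-decreasing on its domain. -/
def IsDecreasing {n : ℕ} (ρ : PT n) : Prop :=
  ∀ x y : Fin n, ρ x = some y → y ≤ x

/-- Member of the monoid `DORPₙ`: monotone and order-decreasing. -/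
def IsDORP {n : ℕ} (ρ : PT n) : Prop :=
  IsDecreasing ρ ∧ (IsIsotone ρ ∨ IsAntitone ρ)

/-- The image of a partial transformation. -/
def im {n : ℕ} (ρ : PT n) : Set (Fin n) := {y | ∃ x, ρ x = some y}

/-- The domain of a partial transformation. -/
def domSet {n : ℕ} (ρ : PT n) : Set (Fin n) := {x | ρ x ≠ none}

/-- The height of a partial transformation: the size of its image. -/
noncomputable def height {n : ℕ} (ρ : PT n) : ℕ := (im ρ).ncard

/-- Equality of kernels: same domain and the same partition into fibers. -/
def kerEq {n : ℕ} (ρ σ : PT n) : Prop :=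
  (∀ x, ρ x = none ↔ σ x = none) ∧ (∀ x y, ρ x = ρ y ↔ σ x = σ y)

attribute [reducible] PT


noncomputable def invPT {n : ℕ} (ρ : PT n) : PT n := fun y =>
  if h : (Finset.univ.filter (fun x => ρ x = some y)).Nonempty
  then some ((Finset.univ.filter (fun x => ρ x = some y)).min' h)
  else none

lemma invPT_eq_some {n : ℕ} (ρ : PT n) {x y : Fin n} (h : ρ x = some y) :
    ∃ m, invPT ρ y = some m := by
  have hne : (Finset.univ.filter (fun x => ρ x = some y)).Nonempty :=
    ⟨x, by simp [h]⟩
  exact ⟨_, dif_pos hne⟩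

lemma invPT_spec {n : ℕ} (ρ : PT n) {y m : Fin n} (h : invPT ρ y = some m) :
    ρ m = some y ∧ ∀ x, ρ x = some y → m ≤ x := by
  unfold invPT at h
  split at h
  · rename_i hne
    have hm : (Finset.univ.filter (fun x => ρ x = some y)).min' hne = m :=
      Option.some.inj h
    subst hm
    refine ⟨?_, ?_⟩
    · have := Finset.min'_mem (Finset.univ.filter (fun x => ρ x = some y)) hne
      simpa using this
    · intro x hx
      exact Finset.min'_le _ _ (by simp [hx])
  · simp at h

/-- For every `ρ ∈ DORPₙ` there is `ρ' ∈ Pₙ` with `ρρ'ρ = ρ`, and both `ρρ'` and `ρ'ρ`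
are idempotents lying in `DORPₙ`; in fact `ρ'ρ` is the identity on `im ρ`. Thus
`DORPₙ` is an inverse-ideal of `Pₙ`. -/
theorem stmt11 (n : ℕ) (ρ : PT n) (h : IsDORP ρ) :
    ∃ ρ' : PT n,
      comp (comp ρ ρ') ρ = ρ ∧
      IsDORP (comp ρ ρ') ∧ comp (comp ρ ρ') (comp ρ ρ') = comp ρ ρ' ∧
      IsDORP (comp ρ' ρ) ∧ comp (comp ρ' ρ) (comp ρ' ρ) = comp ρ' ρ ∧
      (∀ x y : Fin n, comp ρ' ρ x = some y ↔ (y = x ∧ x ∈ im ρ)) := by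
  classical
  refine ⟨invPT ρ, ?_, ?_, ?_, ?_, ?_, ?_⟩
  · -- ρ ρ' ρ = ρ
    funext x
    simp only [comp]
    cases hx : ρ x with
    | none => simp
    | some y =>
      obtain ⟨m, hm⟩ := invPT_eq_some ρ hx
      have := (invPT_spec ρ hm).1
      simp [hm, this]
  · -- IsDORP (comp ρ ρ')
    constructor
    · intro x m hx
      simp only [comp] at hx
      cases hy : ρ x with
      | none => simp [hy] at hx
      | some y =>
        simp only [hy, Option.bind_some] at hx
        exact le_trans ((invPT_spec ρ hx).2 x hy) le_rfl
    · left
      intro x x' m m' hm hm' hle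
      simp only [comp] at hm hm'
      cases hy : ρ x with
      | none => simp [hy] at hm
      | some y =>
      cases hy' : ρ x' with
      | none => simp [hy'] at hm'
      | some y' =>
      simp only [hy, hy', Option.bind_some] at hm hm'
      obtain ⟨hρm, hmin⟩ := invPT_spec ρ hm
      obtain ⟨hρm', hmin'⟩ := invPT_spec ρ hm'
      by_contra hc
      push_neg at hc
      have hlt : m' < m := hc
      have hyy' : y = y' := by
        rcases h.2 with hiso | hanti
        · have h1 : y ≤ y' := hiso x x' y y' hy hy' hle
          have h2 : y' ≤ y := hiso m' m y' y hρm' hρm hlt.le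
          exact le_antisymm h1 h2
        · have h1 : y' ≤ y := hanti x x' y y' hy hy' hle
          have h2 : y ≤ y' := hanti m' m y' y hρm' hρm hlt.le
          exact le_antisymm h2 h1
      subst hyy'
      exact absurd (hmin m' hρm') (not_le.mpr hlt)
  · -- idempotent ρρ'
    funext x
    simp only [comp]
    cases hy : ρ x with
    | none => simp
    | some y =>
      simp only [Option.bind_some]
      cases hm : invPT ρ y with
      | none => simp
      | some m =>
        have hρm := (invPT_spec ρ hm).1
        simp [comp, hρm, hm]
  · -- IsDORP (comp ρ' ρ)
    constructor
    · intro x y hx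
      simp only [comp] at hx
      cases hm : invPT ρ x with
      | none => simp [hm] at hx
      | some m =>
        rw [hm, Option.bind_some, (invPT_spec ρ hm).1] at hx
        exact le_of_eq (Option.some.inj hx).symm
    · left
      intro x x' y y' hy hy' hle
      simp only [comp] at hy hy'
      cases hm : invPT ρ x with
      | none => simp [hm] at hy
      | some m =>
      cases hm' : invPT ρ x' with
      | none => simp [hm'] at hy'
      | some m' =>
      rw [hm, Option.bind_some, (invPT_spec ρ hm).1] at hy
      rw [hm', Option.bind_some, (invPT_spec ρ hm').1] at hy'
      have := Option.some.inj hy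
      have := Option.some.inj hy'
      omega
  · -- idempotent ρ'ρ
    funext x
    simp only [comp]
    cases hm : invPT ρ x with
    | none => simp
    | some m =>
      simp only [Option.bind_some]
      have h1 := (invPT_spec ρ hm).1
      rw [h1]
      simp [comp, hm, h1]
  · -- identity on im ρ
    intro x y
    constructor
    · intro hx
      simp only [comp] at hx
      cases hm : invPT ρ x with
      | none => simp [hm] at hx
      | some m =>
        rw [hm, Option.bind_some, (invPT_spec ρ hm).1] at hx
        exact ⟨(Option.some.inj hx).symm, ⟨m, (invPT_spec ρ hm).1⟩⟩
    · rintro ⟨rfl, ⟨a, ha⟩⟩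
      obtain ⟨m, hm⟩ := invPT_eq_some ρ ha
      have h1 := (invPT_spec ρ hm).1
      simp [comp, hm, h1]
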